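/- Let T be a rooted tree and S a finite set of nodes closed under pairwise LCA (i.e., u, v ∈ S implies LCA(u,v) ∈ S). Define a graph G on vertex set S with an edge between u, v ∈ S iff no other node x ∈ S lies strictly on the tree path between u and v (i.e., there is no x ∈ S, x ≠ u, x ≠ v with dist(x,u) + dist(x,v) = dist(u,v)). Then G is a tree (connected and acyclic) with |S| - 1 edges. -/

import Mathlib

variable {V : Type} [Fintype V] [DecidableEq V]

/-- `u` is an ancestor of `v` in the tree `G` rooted at `root`:
`u` lies on the unique path from `root` to `v`. -/
def isAncestor (G : SimpleGraph V) (root u v : V) : Prop :=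
  G.dist root u + G.dist u v = G.dist root v

/-- `w` is the lowest common ancestor of `u` and `v`: a common ancestor such that
every common ancestor of `u` and `v` is an ancestor of `w`. -/
def isLCA (G : SimpleGraph V) (root u v w : V) : Prop :=
  isAncestor G root w u ∧ isAncestor G root w v ∧
    ∀ x, isAncestor G root x u → isAncestor G root x v → isAncestor G root x w

/-- The virtual (compressed) tree of a set `S` of nodes of the tree `G`:
`u` and `v` are adjacent iff both are in `S` and no other node of `S` lies on
the tree path between them. -/
def virtGraph (G : SimpleGraph V) (S : Finset V) : SimpleGraph V :=
  SimpleGraph.fromRel fun u v =>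
    u ∈ S ∧ v ∈ S ∧ ¬ ∃ x ∈ S, x ≠ u ∧ x ≠ v ∧ G.dist u x + G.dist x v = G.dist u v

section VTauxSec
open SimpleGraph
set_option linter.unusedSectionVars false
namespace VTaux

variable {G : SimpleGraph V}

/-- A walk whose length equals the distance between its endpoints is a path. -/
lemma isPath_of_len_eq_dist : ∀ {a b : V} (w : G.Walk a b), w.length = G.dist a b → w.IsPath := by
  intro a b w
  induction w with
  | nil => intro _; exact SimpleGraph.Walk.IsPath.nil
  | @cons a c b h p ih =>
    intro hl
    rw [SimpleGraph.Walk.length_cons] at hl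
    have hpr : G.Reachable c b := p.reachable
    obtain ⟨q, hq⟩ := hpr.exists_walk_length_eq_dist
    have h1 : G.dist c b ≤ p.length := SimpleGraph.dist_le p
    have h2 : G.dist a b ≤ q.length + 1 := by
      have := SimpleGraph.dist_le (SimpleGraph.Walk.cons h q)
      simpa [SimpleGraph.Walk.length_cons] using this
    have hplen : p.length = G.dist c b := by omega
    have hpath := ih hplen
    have hanotin : a ∉ p.support := by
      intro ha
      have hdrop := SimpleGraph.dist_le (p.dropUntil a ha)
      have htake := SimpleGraph.dist_le (p.takeUntil a ha)
      have hsum : (p.takeUntil a ha).length + (p.dropUntil a ha).length = p.length := by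
        rw [← SimpleGraph.Walk.length_append, p.take_spec ha]
      have hca : c ≠ a := fun hca => G.irrefl (hca ▸ h)
      have hreach : G.Reachable c a := (p.takeUntil a ha).reachable
      have : 0 < G.dist c a := hreach.pos_dist_of_ne hca
      omega
    exact hpath.cons hanotin

lemma walk_eq (hT : G.IsTree) {a b : V} {p q : G.Walk a b} (hp : p.IsPath) (hq : q.IsPath) :
    p = q := by
  have := hT.2.path_unique ⟨p, hp⟩ ⟨q, hq⟩
  exact Subtype.ext_iff.mp this

lemma between_of_mem (hc : G.Connected) {a b x : V} (w : G.Walk a b) (hw : w.length = G.dist a b)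
    (hx : x ∈ w.support) : G.dist a x + G.dist x b = G.dist a b := by
  have h1 : G.dist a x ≤ (w.takeUntil x hx).length := SimpleGraph.dist_le _
  have h2 : G.dist x b ≤ (w.dropUntil x hx).length := SimpleGraph.dist_le _
  have h3 : (w.takeUntil x hx).length + (w.dropUntil x hx).length = w.length := by
    rw [← SimpleGraph.Walk.length_append, w.take_spec hx]
  have h4 := hc.dist_triangle (u := a) (v := x) (w := b)
  omega

lemma between_total (hT : G.IsTree) {a c b b' : V}
    (hb : G.dist a b + G.dist b c = G.dist a c) (hb' : G.dist a b' + G.dist b' c = G.dist a c)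
    (hle : G.dist a b ≤ G.dist a b') : G.dist a b + G.dist b b' = G.dist a b' := by
  have hc := hT.isConnected
  obtain ⟨p1, hp1⟩ := hc.exists_walk_length_eq_dist a b
  obtain ⟨p2, hp2⟩ := hc.exists_walk_length_eq_dist b c
  obtain ⟨q1, hq1⟩ := hc.exists_walk_length_eq_dist a b'
  obtain ⟨q2, hq2⟩ := hc.exists_walk_length_eq_dist b' c
  have hP : (p1.append p2).length = G.dist a c := by rw [SimpleGraph.Walk.length_append]; omega
  have hQ : (q1.append q2).length = G.dist a c := by rw [SimpleGraph.Walk.length_append]; omega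
  have hPp := isPath_of_len_eq_dist _ hP
  have hQp := isPath_of_len_eq_dist _ hQ
  have hEq : p1.append p2 = q1.append q2 := walk_eq hT hPp hQp
  have hb'mem : b' ∈ (p1.append p2).support := by
    rw [hEq]
    exact (SimpleGraph.Walk.mem_support_append_iff q1 q2).mpr
      (Or.inl (SimpleGraph.Walk.end_mem_support q1))
  rcases (SimpleGraph.Walk.mem_support_append_iff p1 p2).mp hb'mem with hm | hm
  · have h5 := between_of_mem hc p1 hp1 hm
    have hz : G.dist b' b = 0 := by omega
    have hzz : b' = b := hc.dist_eq_zero_iff.mp hz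
    subst hzz
    simp only [SimpleGraph.dist_self]
    omega
  · have h5 := between_of_mem hc p2 hp2 hm
    omega

lemma getVert_concat_len {r a u : V} (p : G.Walk r a) (h : G.Adj a u) :
    (p.concat h).getVert p.length = a := by
  rw [SimpleGraph.Walk.concat_eq_append, SimpleGraph.Walk.getVert_append]
  simp

lemma dist_step (hT : G.IsTree) {x y : V} (h : G.Adj x y) (z : V) :
    G.dist z y = G.dist z x + 1 ∨ G.dist z x = G.dist z y + 1 := by
  have hc := hT.isConnected
  have hxy : G.dist x y = 1 := SimpleGraph.dist_eq_one_iff_adj.mpr h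
  have hyx : G.dist y x = 1 := by rw [SimpleGraph.dist_comm]; exact hxy
  have t1 := hc.dist_triangle (u := z) (v := x) (w := y)
  have t2 := hc.dist_triangle (u := z) (v := y) (w := x)
  by_contra hcon
  push_neg at hcon
  have heq : G.dist z x = G.dist z y := by omega
  obtain ⟨p, hp⟩ := hc.exists_walk_length_eq_dist z x
  have hynotin : y ∉ p.support := by
    intro hy
    have h5 := between_of_mem hc p hp hy
    omega
  have hpath := isPath_of_len_eq_dist p hp
  have hrev : (p.concat h).reverse.IsPath := by
    rw [SimpleGraph.Walk.reverse_concat]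
    refine SimpleGraph.Walk.IsPath.cons hpath.reverse ?_
    simpa [SimpleGraph.Walk.support_reverse] using hynotin
  have hcpath : (p.concat h).IsPath := (SimpleGraph.Walk.isPath_reverse_iff _).mp hrev
  obtain ⟨q, hq⟩ := hc.exists_walk_length_eq_dist z y
  have hqpath := isPath_of_len_eq_dist q hq
  have hEq := walk_eq hT hcpath hqpath
  have hlen := congrArg SimpleGraph.Walk.length hEq
  rw [SimpleGraph.Walk.length_concat] at hlen
  omega

lemma rootward_unique (hT : G.IsTree) {root u a b : V} (ha : G.Adj u a) (hb : G.Adj u b)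
    (hda : G.dist root a + 1 = G.dist root u) (hdb : G.dist root b + 1 = G.dist root u) :
    a = b := by
  have hc := hT.isConnected
  obtain ⟨p, hp⟩ := hc.exists_walk_length_eq_dist root a
  obtain ⟨q, hq⟩ := hc.exists_walk_length_eq_dist root b
  have hP : (p.concat ha.symm).length = G.dist root u := by
    rw [SimpleGraph.Walk.length_concat]; omega
  have hQ : (q.concat hb.symm).length = G.dist root u := by
    rw [SimpleGraph.Walk.length_concat]; omega
  have hPp := isPath_of_len_eq_dist _ hP
  have hQp := isPath_of_len_eq_dist _ hQ
  have hEq : p.concat ha.symm = q.concat hb.symm := walk_eq hT hPp hQp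
  have h1 : (p.concat ha.symm).getVert p.length = a := getVert_concat_len p ha.symm
  have h2 : (q.concat hb.symm).getVert q.length = b := getVert_concat_len q hb.symm
  have hlen : p.length = q.length := by omega
  rw [← h1, ← h2, hEq, hlen]

lemma anc_of_step (hT : G.IsTree) (root v : V) :
    ∀ n (u u' : V), G.dist u v = n → G.Adj u u' → G.dist root u' + 1 = G.dist root u →
      G.dist u' v = G.dist u v + 1 → G.dist root u + G.dist u v = G.dist root v := by
  intro n
  induction n using Nat.strong_induction_on with
  | _ n ih =>
    intro u u' hn hadj hroot hfar
    have hc := hT.isConnected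
    rcases Nat.eq_zero_or_pos n with h0 | hpos
    · subst h0
      have huv : u = v := hc.dist_eq_zero_iff.mp hn
      subst huv
      simp [SimpleGraph.dist_self]
    · obtain ⟨p, hp⟩ := hc.exists_walk_length_eq_dist u v
      have hnotnil : ¬ p.Nil := by
        rw [SimpleGraph.Walk.not_nil_iff_lt_length]
        omega
      set w := p.getVert 1 with hw
      have hadj2 : G.Adj u w := p.adj_snd hnotnil
      have hwmem : w ∈ p.support :=
        SimpleGraph.Walk.mem_support_iff_exists_getVert.mpr ⟨1, rfl, by omega⟩
      have hbet := between_of_mem hc p hp hwmem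
      have hdw : G.dist u w = 1 := SimpleGraph.dist_eq_one_iff_adj.mpr hadj2
      have hwv : G.dist w v = n - 1 := by omega
      have hwne : w ≠ u' := by
        intro h
        rw [h] at hwv
        omega
      have hrootw : G.dist root w = G.dist root u + 1 := by
        rcases dist_step hT hadj2 root with h | h
        · omega
        · exact absurd (rootward_unique hT hadj2 hadj (by omega) hroot) hwne
      have hanc := ih (n-1) (by omega) w u hwv hadj2.symm (by omega) (by omega)
      omega

lemma exists_common_anc (hT : G.IsTree) (root v : V) :
    ∀ n (u : V), G.dist root u = n →
      ∃ z, G.dist u z + G.dist z v = G.dist u v ∧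
        G.dist root z + G.dist z u = G.dist root u ∧
        G.dist root z + G.dist z v = G.dist root v := by
  intro n
  induction n using Nat.strong_induction_on with
  | _ n ih =>
    intro u hn
    have hc := hT.isConnected
    by_cases hanc : G.dist root u + G.dist u v = G.dist root v
    · exact ⟨u, by simp [SimpleGraph.dist_self], by simp [SimpleGraph.dist_self], hanc⟩
    · have hune : root ≠ u := by
        intro h
        subst h
        exact hanc (by simp [SimpleGraph.dist_self])
      have hpos : 0 < n := by
        have := hc.pos_dist_of_ne hune
        omega
      obtain ⟨p, hp⟩ := hc.exists_walk_length_eq_dist u root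
      have hplen : p.length = n := by rw [hp, SimpleGraph.dist_comm]; exact hn
      have hnotnil : ¬ p.Nil := by rw [SimpleGraph.Walk.not_nil_iff_lt_length]; omega
      set u' := p.getVert 1 with hu'
      have hadj : G.Adj u u' := p.adj_snd hnotnil
      have hmem : u' ∈ p.support :=
        SimpleGraph.Walk.mem_support_iff_exists_getVert.mpr ⟨1, rfl, by omega⟩
      have hbet := between_of_mem hc p hp hmem
      have hd1 : G.dist u u' = 1 := SimpleGraph.dist_eq_one_iff_adj.mpr hadj
      have hcomm1 : G.dist u' root = G.dist root u' := SimpleGraph.dist_comm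
      have hcomm2 : G.dist u root = G.dist root u := SimpleGraph.dist_comm
      have hru' : G.dist root u' + 1 = G.dist root u := by omega
      rcases dist_step hT hadj v with hfar | hnear
      · exfalso
        apply hanc
        have hcv1 : G.dist v u = G.dist u v := SimpleGraph.dist_comm
        have hcv2 : G.dist v u' = G.dist u' v := SimpleGraph.dist_comm
        exact anc_of_step hT root v (G.dist u v) u u' rfl hadj hru' (by omega)
      · obtain ⟨z, hz1, hz2, hz3⟩ := ih (n-1) (by omega) u' (by omega)
        have hcv1 : G.dist v u = G.dist u v := SimpleGraph.dist_comm
        have hcv2 : G.dist v u' = G.dist u' v := SimpleGraph.dist_comm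
        have hcz1 : G.dist u' z = G.dist z u' := SimpleGraph.dist_comm
        have hcz2 : G.dist u z = G.dist z u := SimpleGraph.dist_comm
        have t1 := hc.dist_triangle (u := z) (v := u') (w := u)
        have t2 := hc.dist_triangle (u := u) (v := z) (w := v)
        have t3 := hc.dist_triangle (u := u) (v := u') (w := z)
        have t4 := hc.dist_triangle (u := root) (v := z) (w := u)
        have hd1' : G.dist u' u = 1 := by rw [SimpleGraph.dist_comm]; exact hd1
        refine ⟨z, by omega, by omega, hz3⟩

lemma lca_between (hT : G.IsTree) (root u v w : V)
    (hw1 : G.dist root w + G.dist w u = G.dist root u)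
    (hw2 : G.dist root w + G.dist w v = G.dist root v)
    (hmax : ∀ x, (G.dist root x + G.dist x u = G.dist root u) →
      (G.dist root x + G.dist x v = G.dist root v) → G.dist root x + G.dist x w = G.dist root w) :
    G.dist u w + G.dist w v = G.dist u v := by
  have hc := hT.isConnected
  obtain ⟨z, hz1, hz2, hz3⟩ := exists_common_anc hT root v (G.dist root u) u rfl
  have hzw := hmax z hz2 hz3
  have c1 : G.dist u z = G.dist z u := SimpleGraph.dist_comm
  have c2 : G.dist u w = G.dist w u := SimpleGraph.dist_comm
  have t1 := hc.dist_triangle (u := u) (v := w) (w := v)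
  omega

end VTaux

/-- the virtual tree of an LCA-closed set `S` is a tree on `S`
with `|S| - 1` edges. -/
theorem stmt11 (G : SimpleGraph V) (hG : G.IsTree) (root : V)
    (lca : V → V → V) (hlca : ∀ u v, isLCA G root u v (lca u v))
    (S : Finset V) (hS : S.Nonempty)
    (hclosed : ∀ u ∈ S, ∀ v ∈ S, lca u v ∈ S) :
    ((virtGraph G S).induce (S : Set V)).IsTree ∧
      (virtGraph G S).edgeSet.ncard = S.card - 1 := by
  classical
  have hc := hG.isConnected
  -- the minimum element of S
  obtain ⟨r, hrS, hrmin⟩ := S.exists_min_image (G.dist root) hS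
  have hanc_r : ∀ s ∈ S, isAncestor G root r s := by
    intro s hs
    obtain ⟨h1, h2, _⟩ := hlca r s
    have hwS : lca r s ∈ S := hclosed r hrS s hs
    have hmin := hrmin _ hwS
    have h1' : G.dist root (lca r s) + G.dist (lca r s) r = G.dist root r := h1
    have h0 : G.dist (lca r s) r = 0 := by omega
    have hh : lca r s = r := hc.dist_eq_zero_iff.mp h0
    rwa [hh] at h2
  have hantisym : ∀ x y : V, isAncestor G root x y → isAncestor G root y x → x = y := by
    intro x y h1 h2
    have e1 : G.dist root x + G.dist x y = G.dist root y := h1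
    have e2 : G.dist root y + G.dist y x = G.dist root x := h2
    have h0 : G.dist x y = 0 := by omega
    exact hc.dist_eq_zero_iff.mp h0
  have hcomp : ∀ x y v : V, isAncestor G root x v → isAncestor G root y v →
      isAncestor G root x y ∨ isAncestor G root y x := by
    intro x y v hx hy
    rcases le_total (G.dist root x) (G.dist root y) with h | h
    · exact Or.inl (VTaux.between_total hG hx hy h)
    · exact Or.inr (VTaux.between_total hG hy hx h)
  -- parents
  have hpar : ∀ u, u ∈ S → u ≠ r → ∃ p, p ∈ S ∧ isAncestor G root p u ∧ p ≠ u ∧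
      ∀ y ∈ S, isAncestor G root y u → y ≠ u → isAncestor G root y p := by
    intro u hu hur
    have hA : (S.filter (fun x => isAncestor G root x u ∧ x ≠ u)).Nonempty :=
      ⟨r, Finset.mem_filter.mpr ⟨hrS, hanc_r u hu, Ne.symm hur⟩⟩
    obtain ⟨p, hpA, hpmax⟩ := Finset.exists_max_image _ (G.dist root) hA
    rw [Finset.mem_filter] at hpA
    obtain ⟨hpS, hpanc, hpne⟩ := hpA
    refine ⟨p, hpS, hpanc, hpne, ?_⟩
    intro y hyS hyanc hyne
    rcases hcomp y p u hyanc hpanc with h | h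
    · exact h
    · have hymem : y ∈ S.filter (fun x => isAncestor G root x u ∧ x ≠ u) :=
        Finset.mem_filter.mpr ⟨hyS, hyanc, hyne⟩
      have hle := hpmax y hymem
      have e : G.dist root p + G.dist p y = G.dist root y := h
      have h0 : G.dist p y = 0 := by omega
      have hpy : p = y := hc.dist_eq_zero_iff.mp h0
      subst hpy
      show G.dist root p + G.dist p p = G.dist root p
      simp [SimpleGraph.dist_self]
  choose! pa paS pa_anc pa_ne pa_max using hpar
  -- adjacency characterization
  have adj_iff : ∀ u v : V, (virtGraph G S).Adj u v ↔
      (u ∈ S ∧ v ∈ S ∧ u ≠ v ∧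
        ¬∃ x ∈ S, x ≠ u ∧ x ≠ v ∧ G.dist u x + G.dist x v = G.dist u v) := by
    intro u v
    constructor
    · intro huv
      simp only [virtGraph, SimpleGraph.fromRel_adj] at huv
      obtain ⟨hne, h | h⟩ := huv
      · exact ⟨h.1, h.2.1, hne, h.2.2⟩
      · refine ⟨h.2.1, h.1, hne, ?_⟩
        rintro ⟨x, hxS, hxu, hxv, hxd⟩
        refine h.2.2 ⟨x, hxS, hxv, hxu, ?_⟩
        have c1 : G.dist v x = G.dist x v := SimpleGraph.dist_comm
        have c2 : G.dist x u = G.dist u x := SimpleGraph.dist_comm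
        have c3 : G.dist v u = G.dist u v := SimpleGraph.dist_comm
        omega
    · rintro ⟨h1, h2, h3, h4⟩
      simp only [virtGraph, SimpleGraph.fromRel_adj]
      exact ⟨h3, Or.inl ⟨h1, h2, h4⟩⟩
  -- ancestor adjacent implies parent
  have hanc_edge : ∀ u v, u ∈ S → v ∈ S → isAncestor G root u v → u ≠ v →
      (¬∃ x ∈ S, x ≠ u ∧ x ≠ v ∧ G.dist u x + G.dist x v = G.dist u v) →
      v ≠ r ∧ u = pa v := by
    intro u v huS hvS hanc hne hnob
    have hvr : v ≠ r := by
      intro h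
      subst h
      exact hne (hantisym u v hanc (hanc_r u huS))
    have hmax := pa_max v hvS hvr u huS hanc hne
    have hpanc := pa_anc v hvS hvr
    have e1 : G.dist root u + G.dist u v = G.dist root v := hanc
    have e2 : G.dist root (pa v) + G.dist (pa v) v = G.dist root v := hpanc
    have e3 : G.dist root u + G.dist u (pa v) = G.dist root (pa v) := hmax
    have hbet : G.dist u (pa v) + G.dist (pa v) v = G.dist u v := by omega
    refine ⟨hvr, ?_⟩
    by_contra hupa
    exact hnob ⟨pa v, paS v hvS hvr, Ne.symm hupa, pa_ne v hvS hvr, hbet⟩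
  have adj_parent : ∀ u v : V, (virtGraph G S).Adj u v →
      (v ≠ r ∧ u = pa v) ∨ (u ≠ r ∧ v = pa u) := by
    intro u v huv
    rw [adj_iff] at huv
    obtain ⟨huS, hvS, hne, hnob⟩ := huv
    obtain ⟨h1, h2, h3⟩ := hlca u v
    have hwS := hclosed u huS v hvS
    have hbet : G.dist u (lca u v) + G.dist (lca u v) v = G.dist u v :=
      VTaux.lca_between hG root u v (lca u v) h1 h2 (fun x hx hy => h3 x hx hy)
    by_cases hwu : lca u v = u
    · exact Or.inl (hanc_edge u v huS hvS (hwu ▸ h2) hne hnob)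
    · have hwv : lca u v = v := by
        by_contra hwv
        exact hnob ⟨lca u v, hwS, hwu, hwv, hbet⟩
      refine Or.inr (hanc_edge v u hvS huS (hwv ▸ h1) hne.symm ?_)
      rintro ⟨x, hxS, hxv, hxu, hxd⟩
      refine hnob ⟨x, hxS, hxu, hxv, ?_⟩
      have c1 : G.dist v x = G.dist x v := SimpleGraph.dist_comm
      have c2 : G.dist x u = G.dist u x := SimpleGraph.dist_comm
      have c3 : G.dist v u = G.dist u v := SimpleGraph.dist_comm
      omega
  have parent_adj : ∀ v, v ∈ S → v ≠ r → (virtGraph G S).Adj (pa v) v := by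
    intro v hvS hvr
    rw [adj_iff]
    refine ⟨paS v hvS hvr, hvS, pa_ne v hvS hvr, ?_⟩
    rintro ⟨x, hxS, hxp, hxv, hxd⟩
    have hpanc : G.dist root (pa v) + G.dist (pa v) v = G.dist root v := pa_anc v hvS hvr
    have t1 := hc.dist_triangle (u := root) (v := pa v) (w := x)
    have t2 := hc.dist_triangle (u := root) (v := x) (w := v)
    have hancx : isAncestor G root x v := by
      show G.dist root x + G.dist x v = G.dist root v
      omega
    have hxmax : G.dist root x + G.dist x (pa v) = G.dist root (pa v) :=
      pa_max v hvS hvr x hxS hancx hxv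
    have cc : G.dist x (pa v) = G.dist (pa v) x := SimpleGraph.dist_comm
    have hx0 : G.dist (pa v) x = 0 := by omega
    exact hxp (hc.dist_eq_zero_iff.mp hx0).symm
  -- the edge set is the set of parent edges
  have hedge : (virtGraph G S).edgeSet = (fun v => s(pa v, v)) '' ((S.erase r : Finset V) : Set V) := by
    ext e
    induction e with
    | _ u v =>
      simp only [SimpleGraph.mem_edgeSet, Set.mem_image, Finset.mem_coe, Finset.mem_erase]
      constructor
      · intro h
        rcases adj_parent u v h with ⟨hvr, rfl⟩ | ⟨hur, rfl⟩
        · have hvS : v ∈ S := ((adj_iff _ _).mp h).2.1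
          exact ⟨v, ⟨hvr, hvS⟩, rfl⟩
        · have huS : u ∈ S := ((adj_iff _ _).mp h).1
          exact ⟨u, ⟨hur, huS⟩, Sym2.eq_swap⟩
      · rintro ⟨w, ⟨hwr, hwS⟩, hw⟩
        have := parent_adj w hwS hwr
        rw [← SimpleGraph.mem_edgeSet] at this ⊢
        rwa [← hw]
  have hcount : (virtGraph G S).edgeSet.ncard = S.card - 1 := by
    rw [hedge, Set.ncard_image_of_injOn, Set.ncard_coe_finset, Finset.card_erase_of_mem hrS]
    intro x hx y hy hxy
    simp only [Finset.mem_coe, Finset.mem_erase] at hx hy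
    rw [Sym2.eq_iff] at hxy
    rcases hxy with ⟨_, h⟩ | ⟨h1, h2⟩
    · exact h
    · have a1 := pa_anc x hx.2 hx.1
      have a2 := pa_anc y hy.2 hy.1
      rw [h1] at a1
      rw [← h2] at a2
      exact hantisym x y a2 a1
  -- the induced graph
  have hrS' : r ∈ (S : Set V) := hrS
  have hreach : ∀ n : ℕ, ∀ u : V, ∀ hu : u ∈ (S : Set V), G.dist root u ≤ n →
      ((virtGraph G S).induce (S : Set V)).Reachable ⟨u, hu⟩ ⟨r, hrS'⟩ := by
    intro n
    induction n with
    | zero =>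
      intro u hu hd
      have huS : u ∈ S := hu
      by_cases hur : u = r
      · rw [show (⟨u, hu⟩ : (S : Set V)) = ⟨r, hrS'⟩ from Subtype.ext hur]
      · exfalso
        have e : G.dist root (pa u) + G.dist (pa u) u = G.dist root u := pa_anc u huS hur
        have hpos : 0 < G.dist (pa u) u := hc.pos_dist_of_ne (pa_ne u huS hur)
        omega
    | succ n ih =>
      intro u hu hd
      have huS : u ∈ S := hu
      by_cases hur : u = r
      · rw [show (⟨u, hu⟩ : (S : Set V)) = ⟨r, hrS'⟩ from Subtype.ext hur]
      · have hpaS : pa u ∈ S := paS u huS hur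
        have hpaS' : pa u ∈ (S : Set V) := hpaS
        have e : G.dist root (pa u) + G.dist (pa u) u = G.dist root u := pa_anc u huS hur
        have hpos : 0 < G.dist (pa u) u := hc.pos_dist_of_ne (pa_ne u huS hur)
        have hih := ih (pa u) hpaS' (by omega)
        have hadj : ((virtGraph G S).induce (S : Set V)).Adj ⟨u, hu⟩ ⟨pa u, hpaS'⟩ := by
          show (virtGraph G S).Adj u (pa u)
          exact (parent_adj u huS hur).symm
        exact hadj.reachable.trans hih
  have hconn : ((virtGraph G S).induce (S : Set V)).Connected := by
    haveI : Nonempty (S : Set V) := ⟨⟨r, hrS'⟩⟩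
    refine SimpleGraph.Connected.mk ?_
    intro a b
    have h1 := hreach (G.dist root a) a a.2 le_rfl
    have h2 := hreach (G.dist root b) b b.2 le_rfl
    exact h1.trans h2.symm
  have hacyc : ((virtGraph G S).induce (S : Set V)).IsAcyclic := by
    intro v0 c hcyc
    obtain ⟨u, humem', hmax⟩ := Finset.exists_max_image c.support.toFinset
      (fun a => G.dist root (a : V)) ⟨v0, List.mem_toFinset.mpr c.start_mem_support⟩
    have humem : u ∈ c.support := List.mem_toFinset.mp humem'
    have hmax' : ∀ y, y ∈ c.support → G.dist root (y : V) ≤ G.dist root (u : V) := fun y hy =>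
      hmax y (List.mem_toFinset.mpr hy)
    have hsub : ∀ z, z ∈ (c.rotate u humem).support → z ∈ c.support := by
      intro z hz
      rcases (SimpleGraph.Walk.mem_support_iff _).mp hz with h | h
      · exact h ▸ humem
      · have h2 := (SimpleGraph.Walk.support_rotate c u humem).mem_iff.mp h
        rw [c.support_eq_cons]
        exact List.mem_cons_of_mem _ h2
    obtain ⟨x, hadj1, q, hq⟩ : ∃ x, ∃ h : ((virtGraph G S).induce (S : Set V)).Adj u x,
        ∃ q : ((virtGraph G S).induce (S : Set V)).Walk x u,
        c.rotate u humem = SimpleGraph.Walk.cons h q := by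
      cases hr : c.rotate u humem with
      | nil =>
        exfalso
        have h' := hcyc.rotate humem
        rw [hr] at h'
        exact SimpleGraph.Walk.IsCycle.not_of_nil h'
      | cons h q => exact ⟨_, h, q, rfl⟩
    have hcyc' : (SimpleGraph.Walk.cons hadj1 q).IsCycle := hq ▸ hcyc.rotate humem
    have h3 := hcyc'.three_le_length
    rw [SimpleGraph.Walk.length_cons] at h3
    obtain ⟨y, hadj2, q2, hq2⟩ : ∃ y, ∃ h : ((virtGraph G S).induce (S : Set V)).Adj u y,
        ∃ q2 : ((virtGraph G S).induce (S : Set V)).Walk y x,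
        q.reverse = SimpleGraph.Walk.cons h q2 := by
      cases hr : q.reverse with
      | nil =>
        exfalso
        have hl : q.length = 0 := by
          have h5 := congrArg SimpleGraph.Walk.length hr
          simpa using h5
        omega
      | cons h q2 => exact ⟨_, h, q2, rfl⟩
    have hxy : x ≠ y := by
      intro hxyeq
      have hcyc'' := (SimpleGraph.Walk.cons_isCycle_iff q hadj1).mp hcyc'
      apply hcyc''.2
      have hmem : s(u, y) ∈ q.reverse.edges := by
        rw [hq2, SimpleGraph.Walk.edges_cons]
        exact List.mem_cons_self
      rw [SimpleGraph.Walk.edges_reverse, List.mem_reverse] at hmem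
      rw [← hxyeq] at hmem
      exact hmem
    have hxmem : x ∈ c.support := by
      apply hsub
      rw [hq, SimpleGraph.Walk.support_cons]
      exact List.mem_cons_of_mem _ q.start_mem_support
    have hymem : y ∈ c.support := by
      apply hsub
      rw [hq, SimpleGraph.Walk.support_cons]
      apply List.mem_cons_of_mem
      have hy : y ∈ q.reverse.support := by
        rw [hq2, SimpleGraph.Walk.support_cons]
        exact List.mem_cons_of_mem _ q2.start_mem_support
      rwa [SimpleGraph.Walk.support_reverse, List.mem_reverse] at hy
    have key : ∀ z : (S : Set V), ((virtGraph G S).induce (S : Set V)).Adj u z →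
        z ∈ c.support → (z : V) = pa (u : V) := by
      intro z hadj hzmem
      have hvadj : (virtGraph G S).Adj (u : V) (z : V) := hadj
      rcases adj_parent (u : V) (z : V) hvadj with ⟨hzr, h⟩ | ⟨hur, h⟩
      · exfalso
        have hzS : (z : V) ∈ S := z.2
        have ha := pa_anc (z : V) hzS hzr
        rw [← h] at ha
        have hne := pa_ne (z : V) hzS hzr
        rw [← h] at hne
        have e : G.dist root (u : V) + G.dist (u : V) (z : V) = G.dist root (z : V) := ha
        have hpos : 0 < G.dist (u : V) (z : V) := hc.pos_dist_of_ne hne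
        have hle := hmax' z hzmem
        omega
      · exact h
    have hx_pa := key x hadj1 hxmem
    have hy_pa := key y hadj2 hymem
    exact hxy (Subtype.ext (hx_pa.trans hy_pa.symm))
  exact ⟨⟨hconn, hacyc⟩, hcount⟩
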